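/- arXiv:1904.04230 — 3 statements merged into one kernel-verified Lean document; each statement's English description precedes it below -/
import Mathlib

section
/- In the simplex category, for every natural number n ≥ 1 the square formed by the coface maps δ₀ : [n−1] → [n] (top), δₙ : [n−1] → [n] (left), δ_{n+1} : [n] → [n+1] (right) and δ₀ : [n] → [n+1] (bottom) commutes (the simplicial identity δ_{n+1} ∘ δ₀ = δ₀ ∘ δₙ) and is a pushout square in the simplex category. -/
open CategoryTheory SimplexCategory Limits

private lemma delta_apply {k : ℕ} (p : Fin (k + 2)) (i : Fin (k + 1)) :
    (SimplexCategory.δ p).toOrderHom i = p.succAbove i := rfl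

/-- In the simplex category, for every natural number `n ≥ 1` (written
`n = m + 1`), the square with top `δ 0 : [n-1] ⟶ [n]`, left `δ n : [n-1] ⟶ [n]`,
right `δ (n+1) : [n] ⟶ [n+1]` and bottom `δ 0 : [n] ⟶ [n+1]` commutes
(`δ 0 ≫ δ (n+1) = δ n ≫ δ 0`, i.e. `δ_{n+1} ∘ δ₀ = δ₀ ∘ δₙ`) and is a pushout square. -/
theorem stmt0 (n m : ℕ) (hn : n = m + 1) :
    (SimplexCategory.δ (0 : Fin (m + 2)) ≫ SimplexCategory.δ (⟨n + 1, by omega⟩ : Fin (m + 3)) =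
      SimplexCategory.δ (⟨n, by omega⟩ : Fin (m + 2)) ≫ SimplexCategory.δ (0 : Fin (m + 3))) ∧
    CategoryTheory.IsPushout
      (SimplexCategory.δ (0 : Fin (m + 2)))
      (SimplexCategory.δ (⟨n, by omega⟩ : Fin (m + 2)))
      (SimplexCategory.δ (⟨n + 1, by omega⟩ : Fin (m + 3)))
      (SimplexCategory.δ (0 : Fin (m + 3))) := by
  subst hn
  have h1 : (⟨m + 1, by omega⟩ : Fin (m + 2)) = Fin.last (m + 1) := rfl
  have h2 : (⟨m + 1 + 1, by omega⟩ : Fin (m + 3)) = Fin.last (m + 2) := rfl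
  rw [h1, h2]
  have comm : SimplexCategory.δ (0 : Fin (m + 2)) ≫ SimplexCategory.δ (Fin.last (m + 2)) =
      SimplexCategory.δ (Fin.last (m + 1)) ≫ SimplexCategory.δ (0 : Fin (m + 3)) := by
    have := SimplexCategory.δ_comp_δ (i := (0 : Fin (m + 2))) (j := Fin.last (m + 1))
      (Fin.zero_le _)
    simpa using this
  refine ⟨comm, ?_⟩
  -- the key compatibility from the commuting cocone
  have key : ∀ (s : PushoutCocone (SimplexCategory.δ (0 : Fin (m + 2)))
      (SimplexCategory.δ (Fin.last (m + 1)))) (i : Fin (m + 1)),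
      s.inl.toOrderHom i.succ = s.inr.toOrderHom i.castSucc := by
    intro s i
    have := congrArg (fun f => SimplexCategory.Hom.toOrderHom f i) s.condition
    simpa [SimplexCategory.δ, Fin.succAbove_last] using this
  refine IsPushout.of_isColimit' ⟨comm⟩ (PushoutCocone.IsColimit.mk comm
    (fun s => SimplexCategory.Hom.mk
      ⟨Fin.snoc (fun i => s.inl.toOrderHom i) (s.inr.toOrderHom (Fin.last (m + 1))), ?_⟩)
    (fun s => ?_) (fun s => ?_) (fun s f hl hr => ?_))
  · -- monotonicity of the snoc function
    intro a b hab
    rcases Fin.eq_castSucc_or_eq_last a with ⟨a', rfl⟩ | rfl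
    · rcases Fin.eq_castSucc_or_eq_last b with ⟨b', rfl⟩ | rfl
      · simpa [Fin.snoc_castSucc] using s.inl.toOrderHom.monotone
          (by exact_mod_cast hab : a' ≤ b')
      · simp only [Fin.snoc_castSucc, Fin.snoc_last]
        rcases Fin.eq_castSucc_or_eq_last a' with ⟨a'', rfl⟩ | rfl
        · calc s.inl.toOrderHom a''.castSucc ≤ s.inl.toOrderHom a''.succ :=
                s.inl.toOrderHom.monotone (Fin.castSucc_le_succ _)
            _ = s.inr.toOrderHom a''.castSucc := key s a''
            _ ≤ _ := s.inr.toOrderHom.monotone (Fin.le_last _)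
        · have hk := key s (Fin.last m)
          rw [Fin.succ_last] at hk
          rw [hk]
          exact s.inr.toOrderHom.monotone (Fin.le_last _)
    · have : b = Fin.last (m + 2) := le_antisymm (Fin.le_last _) hab
      subst this
      exact le_rfl
  · -- fac_left : δ (last (m+2)) ≫ desc = s.inl
    apply SimplexCategory.Hom.ext
    ext i
    simp only [SimplexCategory.comp_toOrderHom, SimplexCategory.Hom.toOrderHom_mk,
      OrderHom.comp_coe, OrderHom.coe_mk, Function.comp_apply, delta_apply,
      Fin.succAbove_last, Fin.snoc_castSucc]
    erw [OrderHom.coe_mk, Fin.snoc_castSucc]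
  · -- fac_right : δ 0 ≫ desc = s.inr
    apply SimplexCategory.Hom.ext
    ext i
    simp only [SimplexCategory.comp_toOrderHom, SimplexCategory.Hom.toOrderHom_mk,
      OrderHom.comp_coe, OrderHom.coe_mk, Function.comp_apply, delta_apply,
      Fin.zero_succAbove]
    rcases Fin.eq_castSucc_or_eq_last i with ⟨i', rfl⟩ | rfl
    · erw [show (i'.castSucc).succ = (i'.succ).castSucc from rfl, OrderHom.coe_mk, Fin.snoc_castSucc]
      exact congrArg Fin.val (key s i')
    · simp only [SimplexCategory.len_mk, Fin.succ_last, Fin.snoc_last]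
      erw [OrderHom.coe_mk, Fin.snoc_last]
  · -- uniqueness
    apply SimplexCategory.Hom.ext
    ext j
    rcases Fin.eq_castSucc_or_eq_last j with ⟨j', rfl⟩ | rfl
    · have := congrArg (fun g => (SimplexCategory.Hom.toOrderHom g j' : ℕ)) hl
      simp [SimplexCategory.δ, Fin.succAbove_last, Fin.snoc_castSucc] at this
      exact this.trans
        (congrArg Fin.val (Fin.snoc_castSucc (α := fun _ => Fin _) _ _ _)).symm
    · have h3 : (SimplexCategory.δ (0 : Fin (m + 3)) ≫ f).toOrderHom (Fin.last (m + 1))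
          = s.inr.toOrderHom (Fin.last (m + 1)) := by rw [hr]
      simp only [SimplexCategory.δ, SimplexCategory.mkHom, SimplexCategory.comp_toOrderHom,
        SimplexCategory.Hom.toOrderHom_mk, OrderHom.comp_coe, OrderHom.coe_mk,
        Function.comp_apply, Fin.zero_succAbove, Fin.succ_last] at h3
      simp only [SimplexCategory.Hom.toOrderHom_mk, OrderHom.coe_mk, Fin.snoc_last]
      exact (congrArg Fin.val h3).trans
        (congrArg Fin.val (Fin.snoc_last (α := fun _ => Fin _) _ _)).symm
end

section
/- Let H ⊗ A be the tensor product algebra ((h⊗a)(y⊗b) = hy ⊗ ab), regard H ⊗ A as a left A-module via a·(y⊗b) = a₍₋₁₎y ⊗ a₍₀₎b, and let N be a left A-module; since this left A-action commutes with right multiplication by H ⊗ A, the space Hom_A(H⊗A, N) of left A-module maps is a left H⊗A-module via ((h⊗a)·ψ)(ξ) = ψ(ξ·(h⊗a)). Then: (i) the formula ((h⊗a)·φ)(x) = a₍₀₎·φ(S⁻¹(a₍₋₁₎) x h) defines a left H⊗A-module structure on Hom_k(H, N); (ii) the map Hom_A(H⊗A, N) → Hom_k(H, N), ψ ↦ (x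 ↦ ψ(x ⊗ 1_A)), is an isomorphism of left H⊗A-modules. -/
/-!
# Statement 4

`k` a field, `H` a Hopf algebra over `k` with bijective antipode `S` (inverse `S'`), `A` a left
`H`-comodule algebra with coaction `λ(a) = a₍₋₁₎ ⊗ a₍₀₎`, and `N` a left `A`-module.  `H ⊗ A` is
the tensor product algebra, and a left `A`-module via `a · (y ⊗ b) = a₍₋₁₎ y ⊗ a₍₀₎ b = λ(a) * (y ⊗ b)`.
`Hom_A(H ⊗ A, N)` (encoded by `IsALin`) is a left `H ⊗ A`-module via `(w · ψ)(ξ) = ψ (ξ * w)`.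
Then:
(i) `((h ⊗ a) · φ)(x) = a₍₀₎ • φ (S⁻¹(a₍₋₁₎) * x * h)` defines a left `H ⊗ A`-module structure
on `Hom_k(H, N)` (the action `Theta` below);
(ii) `ψ ↦ (x ↦ ψ (x ⊗ 1_A))` is an isomorphism of left `H ⊗ A`-modules
`Hom_A(H ⊗ A, N) → Hom_k(H, N)`.
-/

open TensorProduct

noncomputable section
namespace Stmt4Aux

open Coalgebra HopfAlgebra LinearMap

variable {k : Type} [Field k]

section Coalg

variable {C : Type} [AddCommGroup C] [Module k C] [Coalgebra k C]

lemma sum_counit_smul_left {M : Type} [AddCommGroup M] [Module k M]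
    (F : C →ₗ[k] M) {c : C} {ι : Type} (r : Coalgebra.Repr k c ι) :
    ∑ i ∈ r.index, counit (R := k) (r.left i) • F (r.right i) = F c := by
  have h : ∑ i ∈ r.index, counit (R := k) (r.left i) • r.right i = c := by
    have h2 := congrArg (TensorProduct.lid k C) (Coalgebra.sum_counit_tmul_eq r)
    simp only [map_sum, TensorProduct.lid_tmul, one_smul] at h2
    exact h2
  calc ∑ i ∈ r.index, counit (R := k) (r.left i) • F (r.right i)
      = F (∑ i ∈ r.index, counit (R := k) (r.left i) • r.right i) := by
        simp [map_sum]
    _ = F c := by rw [h]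

lemma sum_counit_smul_right {M : Type} [AddCommGroup M] [Module k M]
    (F : C →ₗ[k] M) {c : C} {ι : Type} (r : Coalgebra.Repr k c ι) :
    ∑ i ∈ r.index, counit (R := k) (r.right i) • F (r.left i) = F c := by
  have h : ∑ i ∈ r.index, counit (R := k) (r.right i) • r.left i = c := by
    have h2 := congrArg (TensorProduct.rid k C) (Coalgebra.sum_tmul_counit_eq r)
    simp only [map_sum, TensorProduct.rid_tmul, one_smul] at h2
    exact h2
  calc ∑ i ∈ r.index, counit (R := k) (r.right i) • F (r.left i)
      = F (∑ i ∈ r.index, counit (R := k) (r.right i) • r.left i) := by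
        simp [map_sum]
    _ = F c := by rw [h]

lemma coassoc_sum {M : Type} [AddCommGroup M] [Module k M]
    (L : C ⊗[k] (C ⊗[k] C) →ₗ[k] M) {c : C} {ι κ Λ : Type} (rc : Coalgebra.Repr k c ι)
    (r1 : ∀ i, Coalgebra.Repr k (rc.left i) κ) (r2 : ∀ i, Coalgebra.Repr k (rc.right i) Λ) :
    ∑ i ∈ rc.index, ∑ j ∈ (r1 i).index,
        L ((r1 i).left j ⊗ₜ ((r1 i).right j ⊗ₜ rc.right i))
      = ∑ i ∈ rc.index, ∑ j ∈ (r2 i).index,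
        L (rc.left i ⊗ₜ ((r2 i).left j ⊗ₜ (r2 i).right j)) := by
  simpa [map_sum] using congrArg L (Coalgebra.sum_tmul_tmul_eq rc r1 r2)

lemma repr_mul {B : Type} [Ring B] [Algebra k B] (f g : C →ₗ[k] B) {c : C} {ι : Type}
    (r : Coalgebra.Repr k c ι) :
    ∑ i ∈ r.index, f (r.left i) * g (r.right i)
      = LinearMap.mul' k B (TensorProduct.map f g (comul (R := k) c)) := by
  rw [← r.eq]; simp [map_sum]

lemma conv_unique {B : Type} [Ring B] [Algebra k B] (f m g : C →ₗ[k] B)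
    (Hf : LinearMap.mul' k B ∘ₗ TensorProduct.map f m ∘ₗ comul
        = Algebra.linearMap k B ∘ₗ counit)
    (Hg : LinearMap.mul' k B ∘ₗ TensorProduct.map m g ∘ₗ comul
        = Algebra.linearMap k B ∘ₗ counit) : f = g := by
  ext c
  set L : C ⊗[k] (C ⊗[k] C) →ₗ[k] B :=
    LinearMap.mul' k B ∘ₗ
      TensorProduct.map f (LinearMap.mul' k B ∘ₗ TensorProduct.map m g) with hL
  have hLapp : ∀ x y z : C, L (x ⊗ₜ (y ⊗ₜ z)) = f x * (m y * g z) := by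
    intro x y z; simp [hL]
  set rc := ℛ k c with hrc
  set r1 : ∀ i, Coalgebra.Repr k (rc.left i) (C × C) := fun i => ℛ k (rc.left i) with hr1
  set r2 : ∀ i, Coalgebra.Repr k (rc.right i) (C × C) := fun i => ℛ k (rc.right i) with hr2
  have Hfe : ∀ x : C, LinearMap.mul' k B (TensorProduct.map f m (comul (R := k) x))
      = algebraMap k B (counit (R := k) x) := fun x => LinearMap.congr_fun Hf x
  have Hge : ∀ x : C, LinearMap.mul' k B (TensorProduct.map m g (comul (R := k) x))
      = algebraMap k B (counit (R := k) x) := fun x => LinearMap.congr_fun Hg x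
  calc f c = ∑ i ∈ rc.index, counit (R := k) (rc.right i) • f (rc.left i) :=
        (sum_counit_smul_right f rc).symm
    _ = ∑ i ∈ rc.index, f (rc.left i) * algebraMap k B (counit (R := k) (rc.right i)) := by
        refine Finset.sum_congr rfl fun i _ => ?_
        rw [Algebra.smul_def, ← Algebra.commutes]
    _ = ∑ i ∈ rc.index, f (rc.left i) *
          (∑ j ∈ (r2 i).index, m ((r2 i).left j) * g ((r2 i).right j)) := by
        refine Finset.sum_congr rfl fun i _ => ?_
        rw [repr_mul m g (r2 i), Hge]
    _ = ∑ i ∈ rc.index, ∑ j ∈ (r2 i).index,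
          L (rc.left i ⊗ₜ ((r2 i).left j ⊗ₜ (r2 i).right j)) := by
        refine Finset.sum_congr rfl fun i _ => ?_
        rw [Finset.mul_sum]
        exact Finset.sum_congr rfl fun j _ => by rw [hLapp]
    _ = ∑ i ∈ rc.index, ∑ j ∈ (r1 i).index,
          L ((r1 i).left j ⊗ₜ ((r1 i).right j ⊗ₜ rc.right i)) :=
        (coassoc_sum L rc r1 r2).symm
    _ = ∑ i ∈ rc.index,
          (∑ j ∈ (r1 i).index, f ((r1 i).left j) * m ((r1 i).right j)) * g (rc.right i) := by
        refine Finset.sum_congr rfl fun i _ => ?_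
        rw [Finset.sum_mul]
        exact Finset.sum_congr rfl fun j _ => by rw [hLapp, mul_assoc]
    _ = ∑ i ∈ rc.index, algebraMap k B (counit (R := k) (rc.left i)) * g (rc.right i) := by
        refine Finset.sum_congr rfl fun i _ => ?_
        rw [repr_mul f m (r1 i), Hfe]
    _ = ∑ i ∈ rc.index, counit (R := k) (rc.left i) • g (rc.right i) := by
        refine Finset.sum_congr rfl fun i _ => ?_
        rw [Algebra.smul_def]
    _ = g c := sum_counit_smul_left g rc

end Coalg

section Hopf

variable {H : Type} [Ring H] [HopfAlgebra k H]

lemma antipode_one' : antipode (R := k) (A := H) (1 : H) = 1 := by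
  have h := mul_antipode_rTensor_comul_apply (R := k) (A := H) 1
  rw [Bialgebra.comul_one, Bialgebra.counit_one, Algebra.TensorProduct.one_def] at h
  simpa using h

lemma mul'_tttComm (u v : H ⊗[k] H) :
    TensorProduct.map (LinearMap.mul' k H) (LinearMap.mul' k H)
      (TensorProduct.tensorTensorTensorComm k H H H H (u ⊗ₜ v)) = u * v := by
  induction u using TensorProduct.induction_on with
  | zero => simp
  | tmul a b =>
    induction v using TensorProduct.induction_on with
    | zero => simp
    | tmul c d => simp [Algebra.TensorProduct.tmul_mul_tmul]
    | add v₁ v₂ ih₁ ih₂ => simp [tmul_add, mul_add] at ih₁ ih₂ ⊢; rw [ih₁, ih₂]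
  | add u₁ u₂ ih₁ ih₂ => simp [add_tmul, add_mul] at ih₁ ih₂ ⊢; rw [ih₁, ih₂]

lemma map_mul'_comul :
    TensorProduct.map (LinearMap.mul' k H) (LinearMap.mul' k H) ∘ₗ
        comul (R := k) (A := H ⊗[k] H)
      = comul (R := k) ∘ₗ LinearMap.mul' k H := by
  apply TensorProduct.ext'
  intro x y
  simp only [LinearMap.comp_apply, TensorProduct.comul_tmul, TensorProduct.AlgebraTensorModule.tensorTensorTensorComm_tmul,
    TensorProduct.map_tmul, LinearMap.mul'_apply, Bialgebra.comul_mul]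
  exact mul'_tttComm (comul (R := k) x) (comul (R := k) y)

lemma counit_mul'_eq :
    counit (R := k) (A := H ⊗[k] H) = counit (R := k) ∘ₗ LinearMap.mul' k H := by
  apply TensorProduct.ext'
  intro x y
  simp [TensorProduct.counit_tmul, Bialgebra.counit_mul, mul_comm]

lemma antipode_anti (a b : H) :
    antipode (R := k) (a * b) = antipode (R := k) b * antipode (R := k) a := by
  have key : antipode (R := k) ∘ₗ LinearMap.mul' k H
      = LinearMap.mul' k H ∘ₗ
          TensorProduct.map (antipode (R := k)) (antipode (R := k)) ∘ₗ
          (TensorProduct.comm k H H).toLinearMap := by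
    apply conv_unique (m := LinearMap.mul' k H)
    · -- S ∘ mul' is a left convolution inverse of mul'
      apply TensorProduct.ext'
      intro x y
      set rx := ℛ k x with hrx
      set ry := ℛ k y with hry
      have hcx : comul (R := k) x = ∑ i ∈ rx.index, rx.left i ⊗ₜ[k] rx.right i := rx.eq.symm
      have hcy : comul (R := k) y = ∑ j ∈ ry.index, ry.left j ⊗ₜ[k] ry.right j := ry.eq.symm
      set rxy : Coalgebra.Repr k (x * y) ((H × H) × (H × H)) :=
        { index := rx.index ×ˢ ry.index
          left := fun p => rx.left p.1 * ry.left p.2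
          right := fun p => rx.right p.1 * ry.right p.2
          eq := by
            rw [Bialgebra.comul_mul, ← rx.eq, ← ry.eq, Finset.sum_mul_sum]
            rw [Finset.sum_product]
            exact Finset.sum_congr rfl fun i _ => Finset.sum_congr rfl fun j _ => by
              simp [Algebra.TensorProduct.tmul_mul_tmul] } with hrxy
      simp only [LinearMap.comp_apply, TensorProduct.comul_tmul, TensorProduct.AlgebraTensorModule.tensorTensorTensorComm_tmul,
        TensorProduct.map_tmul, hcx, hcy, TensorProduct.sum_tmul, TensorProduct.tmul_sum,
        map_sum, TensorProduct.tensorTensorTensorComm_tmul, LinearMap.mul'_apply,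
        LinearEquiv.coe_coe, TensorProduct.counit_tmul,
        Algebra.linearMap_apply]
      rw [Finset.sum_comm]
      have := sum_antipode_mul_eq_algebraMap_counit (R := k) rxy
      rw [hrxy] at this
      simp only [Finset.sum_product] at this
      rw [this, Bialgebra.counit_mul, map_mul]
      rw [smul_eq_mul, mul_comm (counit (R := k) y), map_mul]
    · -- mul' ∘ (S ⊗ S) ∘ comm is a right convolution inverse of mul'
      apply TensorProduct.ext'
      intro x y
      set rx := ℛ k x with hrx
      set ry := ℛ k y with hry
      have hcx : comul (R := k) x = ∑ i ∈ rx.index, rx.left i ⊗ₜ[k] rx.right i := rx.eq.symm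
      have hcy : comul (R := k) y = ∑ j ∈ ry.index, ry.left j ⊗ₜ[k] ry.right j := ry.eq.symm
      simp only [LinearMap.comp_apply, TensorProduct.comul_tmul, TensorProduct.AlgebraTensorModule.tensorTensorTensorComm_tmul,
        TensorProduct.map_tmul, hcx, hcy, TensorProduct.sum_tmul, TensorProduct.tmul_sum,
        map_sum, TensorProduct.tensorTensorTensorComm_tmul, LinearMap.mul'_apply,
        LinearEquiv.coe_coe, TensorProduct.comm_tmul,
        TensorProduct.counit_tmul, Algebra.linearMap_apply, map_mul]
      rw [Finset.sum_comm]
      calc ∑ i ∈ rx.index, ∑ j ∈ ry.index,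
            rx.left i * ry.left j *
              (antipode (R := k) (ry.right j) * antipode (R := k) (rx.right i))
          = ∑ i ∈ rx.index, rx.left i *
              ((∑ j ∈ ry.index, ry.left j * antipode (R := k) (ry.right j)) *
                antipode (R := k) (rx.right i)) := by
            refine Finset.sum_congr rfl fun i _ => ?_
            rw [Finset.sum_mul, Finset.mul_sum]
            exact Finset.sum_congr rfl fun j _ => by noncomm_ring
        _ = ∑ i ∈ rx.index, counit (R := k) y •
              (rx.left i * antipode (R := k) (rx.right i)) := by
            refine Finset.sum_congr rfl fun i _ => ?_
            rw [sum_mul_antipode_eq_smul ry, smul_mul_assoc, one_mul, mul_smul_comm]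
        _ = counit (R := k) y • (counit (R := k) x • (1 : H)) := by
            rw [← Finset.smul_sum, sum_mul_antipode_eq_smul rx]
        _ = algebraMap k H (counit (R := k) x) * algebraMap k H (counit (R := k) y) := by
            rw [smul_smul, mul_comm, Algebra.smul_def, mul_one, map_mul]
        _ = algebraMap k H (counit (R := k) y • counit (R := k) x) := by
            rw [smul_eq_mul, mul_comm (counit (R := k) y), map_mul]
  have := LinearMap.congr_fun key (a ⊗ₜ[k] b)
  simpa using this

variable (S' : H →ₗ[k] H)

lemma S'_one (hS'l : S' ∘ₗ HopfAlgebra.antipode (R := k) = LinearMap.id) :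
    S' (1 : H) = 1 := by
  have := LinearMap.congr_fun hS'l (1 : H)
  rwa [LinearMap.comp_apply, antipode_one', LinearMap.id_apply] at this

lemma antipode_inj (hS'l : S' ∘ₗ HopfAlgebra.antipode (R := k) = LinearMap.id) :
    Function.Injective (antipode (R := k) (A := H)) := by
  intro u v h
  have hu := LinearMap.congr_fun hS'l u
  have hv := LinearMap.congr_fun hS'l v
  simp only [LinearMap.comp_apply, LinearMap.id_apply] at hu hv
  rw [← hu, ← hv, h]

lemma S'_antipode_apply (hS'r : HopfAlgebra.antipode (R := k) ∘ₗ S' = LinearMap.id)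
    (x : H) : antipode (R := k) (S' x) = x := by
  simpa using LinearMap.congr_fun hS'r x

/-- C1 : `∑ h₂ * S'(h₁) = ε(h) • 1`. -/
lemma sum_mul_S' (hS'l : S' ∘ₗ HopfAlgebra.antipode (R := k) = LinearMap.id)
    (hS'r : HopfAlgebra.antipode (R := k) ∘ₗ S' = LinearMap.id)
    {y : H} {ι : Type} (r : Coalgebra.Repr k y ι) :
    ∑ i ∈ r.index, r.right i * S' (r.left i) = counit (R := k) y • 1 := by
  apply antipode_inj S' hS'l
  rw [map_sum, map_smul, antipode_one']
  calc ∑ i ∈ r.index, antipode (R := k) (r.right i * S' (r.left i))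
      = ∑ i ∈ r.index, r.left i * antipode (R := k) (r.right i) := by
        refine Finset.sum_congr rfl fun i _ => ?_
        rw [antipode_anti, S'_antipode_apply S' hS'r]
    _ = counit (R := k) y • 1 := sum_mul_antipode_eq_smul r

/-- C2 : `∑ S'(h₂) * h₁ = ε(h) • 1`. -/
lemma sum_S'_mul (hS'l : S' ∘ₗ HopfAlgebra.antipode (R := k) = LinearMap.id)
    (hS'r : HopfAlgebra.antipode (R := k) ∘ₗ S' = LinearMap.id)
    {y : H} {ι : Type} (r : Coalgebra.Repr k y ι) :
    ∑ i ∈ r.index, S' (r.right i) * r.left i = counit (R := k) y • 1 := by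
  apply antipode_inj S' hS'l
  rw [map_sum, map_smul, antipode_one']
  calc ∑ i ∈ r.index, antipode (R := k) (S' (r.right i) * r.left i)
      = ∑ i ∈ r.index, antipode (R := k) (r.left i) * r.right i := by
        refine Finset.sum_congr rfl fun i _ => ?_
        rw [antipode_anti, S'_antipode_apply S' hS'r]
    _ = counit (R := k) y • 1 := sum_antipode_mul_eq_smul r

end Hopf

end Stmt4Aux
end


noncomputable section

variable (k : Type) [Field k]

/-- The curried action of a `k`-algebra `R` on a module `V`, as a `k`-bilinear map. -/
def csmul (R : Type) [Ring R] [Algebra k R] (V : Type) [AddCommGroup V] [Module k V]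
    [Module R V] [IsScalarTower k R V] [SMulCommClass k R V] : R →ₗ[k] V →ₗ[k] V where
  toFun r :=
    { toFun := fun v => r • v
      map_add' := smul_add r
      map_smul' := fun c v => (smul_comm c r v).symm }
  map_add' r r' := LinearMap.ext fun v => add_smul r r' v
  map_smul' c r := LinearMap.ext fun v => smul_assoc c r v

variable (H : Type) [Ring H] [HopfAlgebra k H]

/-- `H ⊗ H →ₗ End_k(H)`, `u ⊗ v ↦ (x ↦ u * x * v)`. -/
def sandwich : H ⊗[k] H →ₗ[k] (H →ₗ[k] H) :=
  (TensorProduct.lift (LinearMap.llcomp k H H H)) ∘ₗ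
    (TensorProduct.map (LinearMap.mul k H) (LinearMap.mul k H).flip)

/-- `H ⊗ H →ₗ End_k(Hom_k(H, W))`, `u ⊗ v ↦ (φ ↦ (x ↦ φ (u * x * v)))`. -/
def sandwichHom (W : Type) [AddCommGroup W] [Module k W] :
    H ⊗[k] H →ₗ[k] (H →ₗ[k] W) →ₗ[k] (H →ₗ[k] W) :=
  (LinearMap.llcomp k H H W).flip ∘ₗ sandwich k H

variable (A : Type) [Ring A] [Algebra k A] (lco : A →ₐ[k] H ⊗[k] A) (S' : H →ₗ[k] H)
variable (N : Type) [AddCommGroup N] [Module k N] [Module A N]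
  [IsScalarTower k A N] [SMulCommClass k A N]

/-- `H ⊗ A →ₗ A ⊗ (H ⊗ H)`, `h ⊗ a ↦ a₍₀₎ ⊗ (S⁻¹(a₍₋₁₎) ⊗ h)`. -/
def coactS' : H ⊗[k] A →ₗ[k] A ⊗[k] (H ⊗[k] H) :=
  (LinearMap.lTensor A (LinearMap.rTensor H S')) ∘ₗ
    (TensorProduct.assoc k A H H).toLinearMap ∘ₗ
    (LinearMap.rTensor H (TensorProduct.comm k H A).toLinearMap) ∘ₗ
    (TensorProduct.comm k H (H ⊗[k] A)).toLinearMap ∘ₗ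
    (LinearMap.lTensor H lco.toLinearMap)

/-- The action of `H ⊗ A` on `Hom_k(H, N)`:
`((h ⊗ a) · φ)(x) = a₍₀₎ • φ (S⁻¹(a₍₋₁₎) * x * h)`. -/
def Theta : (H ⊗[k] A) →ₗ[k] (H →ₗ[k] N) →ₗ[k] (H →ₗ[k] N) :=
  TensorProduct.curry
    ((TensorProduct.lift (csmul k A (H →ₗ[k] N))) ∘ₗ
      (LinearMap.lTensor A (TensorProduct.lift (sandwichHom k H N))) ∘ₗ
      (TensorProduct.assoc k A (H ⊗[k] H) (H →ₗ[k] N)).toLinearMap ∘ₗ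
      (LinearMap.rTensor (H →ₗ[k] N) (coactS' k H A lco S')))

/-- The predicate selecting `Hom_A(H ⊗ A, N)` inside `Hom_k(H ⊗ A, N)`, where `A` acts on
`H ⊗ A` by `a · t = λ(a) * t`. -/
def IsALin (ψ : H ⊗[k] A →ₗ[k] N) : Prop :=
  ∀ (a : A) (t : H ⊗[k] A), ψ (lco a * t) = a • ψ t

/-- The action of `w ∈ H ⊗ A` on `Hom_A(H ⊗ A, N)`: `(w · ψ)(ξ) = ψ (ξ * w)`. -/
def homAct (w : H ⊗[k] A) (ψ : H ⊗[k] A →ₗ[k] N) : H ⊗[k] A →ₗ[k] N :=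
  ψ ∘ₗ LinearMap.mulRight k w

/-- The comparison map `Hom_A(H ⊗ A, N) → Hom_k(H, N)`, `ψ ↦ (x ↦ ψ (x ⊗ 1_A))`. -/
def restr (ψ : H ⊗[k] A →ₗ[k] N) : H →ₗ[k] N :=
  ψ ∘ₗ ((TensorProduct.mk k H A).flip 1)


namespace Stmt4Aux

open Coalgebra HopfAlgebra

/-- `coactS'` without the coaction applied: `h ⊗ (y ⊗ b) ↦ b ⊗ (S' y ⊗ h)`. -/
def cS : H ⊗[k] (H ⊗[k] A) →ₗ[k] A ⊗[k] (H ⊗[k] H) :=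
  (LinearMap.lTensor A (LinearMap.rTensor H S')) ∘ₗ
    (TensorProduct.assoc k A H H).toLinearMap ∘ₗ
    (LinearMap.rTensor H (TensorProduct.comm k H A).toLinearMap) ∘ₗ
    (TensorProduct.comm k H (H ⊗[k] A)).toLinearMap

@[simp] lemma cS_tmul (h y : H) (b : A) :
    cS k H A S' (h ⊗ₜ (y ⊗ₜ b)) = b ⊗ₜ (S' y ⊗ₜ h) := by
  simp [cS]

lemma coactS'_tmul (h : H) (a : A) :
    coactS' k H A lco S' (h ⊗ₜ a) = cS k H A S' (h ⊗ₜ[k] (lco a)) := rfl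

@[simp] lemma csmul_apply {R : Type} [Ring R] [Algebra k R] {V : Type} [AddCommGroup V]
    [Module k V] [Module R V] [IsScalarTower k R V] [SMulCommClass k R V] (r : R) (v : V) :
    csmul k R V r v = r • v := rfl

/-- `γ : H ⊗ A → A ⊗ H`, `x ⊗ b ↦ b₍₀₎ ⊗ S'(b₍₋₁₎) x`. -/
def gma : H ⊗[k] A →ₗ[k] A ⊗[k] H :=
  (LinearMap.lTensor A (LinearMap.mul' k H)) ∘ₗ coactS' k H A lco S'

lemma gma_tmul (x : H) (b : A) :
    gma k H A lco S' (x ⊗ₜ b)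
      = (LinearMap.lTensor A (LinearMap.mul' k H)) (cS k H A S' (x ⊗ₜ[k] (lco b))) := rfl

/-- `β : A ⊗ H → H ⊗ A`, `a ⊗ x ↦ λ(a) * (x ⊗ 1)`. -/
def bta : A ⊗[k] H →ₗ[k] H ⊗[k] A :=
  TensorProduct.lift (((LinearMap.mul k (H ⊗[k] A)) ∘ₗ lco.toLinearMap).compl₂
    ((TensorProduct.mk k H A).flip 1))

@[simp] lemma bta_tmul (a : A) (x : H) :
    bta k H A lco (a ⊗ₜ x) = lco a * (x ⊗ₜ 1) := by
  simp [bta]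

/-- The auxiliary map `y ⊗ (z ⊗ c) ↦ c ⊗ (S' z * (y * x))`. -/
def gba (x : H) : H ⊗[k] (H ⊗[k] A) →ₗ[k] A ⊗[k] H :=
  (LinearMap.lTensor A (LinearMap.mul' k H)) ∘ₗ cS k H A S' ∘ₗ
    (LinearMap.rTensor (H ⊗[k] A) (LinearMap.mulRight k x))

/-- The auxiliary map `y ⊗ t ↦ t * ((S' y * x) ⊗ 1)`. -/
def bab (x : H) : H ⊗[k] (H ⊗[k] A) →ₗ[k] H ⊗[k] A :=
  (LinearMap.mul' k (H ⊗[k] A)) ∘ₗ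
    (LinearMap.lTensor (H ⊗[k] A)
      (((TensorProduct.mk k H A).flip 1) ∘ₗ (LinearMap.mulRight k x) ∘ₗ S')) ∘ₗ
    (TensorProduct.comm k H (H ⊗[k] A)).toLinearMap

lemma gma_mul_right (x : H) (u : H ⊗[k] A) :
    gma k H A lco S' (u * ((x : H) ⊗ₜ (1 : A)))
      = gba k H A S' x ((LinearMap.lTensor H lco.toLinearMap) u) := by
  induction u using TensorProduct.induction_on with
  | zero => simp
  | tmul y c =>
    rw [Algebra.TensorProduct.tmul_mul_tmul, mul_one, gma_tmul]
    simp [gba, LinearMap.mulRight_apply]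
  | add u₁ u₂ ih₁ ih₂ => rw [add_mul, map_add, map_add, map_add, ih₁, ih₂]

lemma bta_gma_aux (x : H) (u : H ⊗[k] A) :
    bta k H A lco ((LinearMap.lTensor A (LinearMap.mul' k H)) (cS k H A S' (x ⊗ₜ[k] u)))
      = bab k H A S' x ((LinearMap.lTensor H lco.toLinearMap) u) := by
  induction u using TensorProduct.induction_on with
  | zero => simp
  | tmul y c => simp [bab, LinearMap.mulRight_apply]
  | add u₁ u₂ ih₁ ih₂ => simp only [tmul_add, map_add, ih₁, ih₂]

lemma gba_coassoc (hS'l : S' ∘ₗ HopfAlgebra.antipode (R := k) = LinearMap.id)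
    (hS'r : HopfAlgebra.antipode (R := k) ∘ₗ S' = LinearMap.id) (x : H) (u : H ⊗[k] A) :
    gba k H A S' x ((TensorProduct.assoc k H H A).toLinearMap
        ((LinearMap.rTensor A (Coalgebra.comul (R := k))) u))
      = ((TensorProduct.mk k A H).flip x)
          ((TensorProduct.lid k A).toLinearMap
            ((LinearMap.rTensor A (Coalgebra.counit (R := k))) u)) := by
  induction u using TensorProduct.induction_on with
  | zero => simp only [map_zero]
  | tmul y c =>
    set r := ℛ k y with hr
    have hy : Coalgebra.comul (R := k) y = ∑ i ∈ r.index, r.left i ⊗ₜ[k] r.right i := r.eq.symm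
    rw [LinearMap.rTensor_tmul, LinearMap.rTensor_tmul, hy]
    rw [TensorProduct.sum_tmul, map_sum, map_sum]
    have hterm : ∀ i, gba k H A S' x ((TensorProduct.assoc k H H A).toLinearMap
        ((r.left i ⊗ₜ[k] r.right i) ⊗ₜ[k] c))
        = c ⊗ₜ[k] ((S' (r.right i) * r.left i) * x) := by
      intro i
      simp [gba, LinearMap.mulRight_apply, mul_assoc]
    rw [Finset.sum_congr rfl fun i _ => hterm i]
    rw [← TensorProduct.tmul_sum, ← Finset.sum_mul, sum_S'_mul S' hS'l hS'r r]
    simp [TensorProduct.tmul_smul, smul_mul_assoc, TensorProduct.smul_tmul']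
  | add u₁ u₂ ih₁ ih₂ => simp only [map_add, ih₁, ih₂]

lemma bab_coassoc (hS'l : S' ∘ₗ HopfAlgebra.antipode (R := k) = LinearMap.id)
    (hS'r : HopfAlgebra.antipode (R := k) ∘ₗ S' = LinearMap.id) (x : H) (u : H ⊗[k] A) :
    bab k H A S' x ((TensorProduct.assoc k H H A).toLinearMap
        ((LinearMap.rTensor A (Coalgebra.comul (R := k))) u))
      = ((TensorProduct.mk k H A) x)
          ((TensorProduct.lid k A).toLinearMap
            ((LinearMap.rTensor A (Coalgebra.counit (R := k))) u)) := by
  induction u using TensorProduct.induction_on with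
  | zero => simp only [map_zero]
  | tmul y c =>
    set r := ℛ k y with hr
    have hy : Coalgebra.comul (R := k) y = ∑ i ∈ r.index, r.left i ⊗ₜ[k] r.right i := r.eq.symm
    rw [LinearMap.rTensor_tmul, LinearMap.rTensor_tmul, hy]
    rw [TensorProduct.sum_tmul, map_sum, map_sum]
    have hterm : ∀ i, bab k H A S' x ((TensorProduct.assoc k H H A).toLinearMap
        ((r.left i ⊗ₜ[k] r.right i) ⊗ₜ[k] c))
        = ((r.right i * S' (r.left i)) * x) ⊗ₜ[k] c := by
      intro i
      simp [bab, LinearMap.mulRight_apply, Algebra.TensorProduct.tmul_mul_tmul, mul_assoc]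
    rw [Finset.sum_congr rfl fun i _ => hterm i]
    rw [← TensorProduct.sum_tmul, ← Finset.sum_mul, sum_mul_S' S' hS'l hS'r r]
    simp [TensorProduct.smul_tmul', smul_mul_assoc, TensorProduct.tmul_smul]
  | add u₁ u₂ ih₁ ih₂ => simp only [map_add, ih₁, ih₂]

lemma gma_bta_id (hlco_coassoc : (LinearMap.lTensor H lco.toLinearMap) ∘ₗ lco.toLinearMap =
      (TensorProduct.assoc k H H A).toLinearMap ∘ₗ
        (LinearMap.rTensor A Coalgebra.comul) ∘ₗ lco.toLinearMap)
    (hlco_counit : (TensorProduct.lid k A).toLinearMap ∘ₗ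
        (LinearMap.rTensor A Coalgebra.counit) ∘ₗ lco.toLinearMap = LinearMap.id)
    (hS'l : S' ∘ₗ HopfAlgebra.antipode (R := k) = LinearMap.id)
    (hS'r : HopfAlgebra.antipode (R := k) ∘ₗ S' = LinearMap.id) :
    gma k H A lco S' ∘ₗ bta k H A lco = LinearMap.id := by
  apply TensorProduct.ext'
  intro a x
  have h1 := LinearMap.congr_fun hlco_coassoc a
  have h2 := LinearMap.congr_fun hlco_counit a
  simp only [LinearMap.comp_apply, AlgHom.toLinearMap_apply, LinearMap.id_apply] at h1 h2 ⊢
  rw [bta_tmul, gma_mul_right, h1, gba_coassoc k H A S' hS'l hS'r, h2]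
  rfl

lemma bta_gma_id (hlco_coassoc : (LinearMap.lTensor H lco.toLinearMap) ∘ₗ lco.toLinearMap =
      (TensorProduct.assoc k H H A).toLinearMap ∘ₗ
        (LinearMap.rTensor A Coalgebra.comul) ∘ₗ lco.toLinearMap)
    (hlco_counit : (TensorProduct.lid k A).toLinearMap ∘ₗ
        (LinearMap.rTensor A Coalgebra.counit) ∘ₗ lco.toLinearMap = LinearMap.id)
    (hS'l : S' ∘ₗ HopfAlgebra.antipode (R := k) = LinearMap.id)
    (hS'r : HopfAlgebra.antipode (R := k) ∘ₗ S' = LinearMap.id) :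
    bta k H A lco ∘ₗ gma k H A lco S' = LinearMap.id := by
  apply TensorProduct.ext'
  intro x b
  have h1 := LinearMap.congr_fun hlco_coassoc b
  have h2 := LinearMap.congr_fun hlco_counit b
  simp only [LinearMap.comp_apply, AlgHom.toLinearMap_apply, LinearMap.id_apply] at h1 h2 ⊢
  rw [gma_tmul, bta_gma_aux, h1, bab_coassoc k H A S' hS'l hS'r, h2]
  rfl

lemma bta_equivariant (a : A) (v : A ⊗[k] H) :
    bta k H A lco ((LinearMap.rTensor H (LinearMap.mulLeft k a)) v)
      = lco a * bta k H A lco v := by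
  induction v using TensorProduct.induction_on with
  | zero => simp
  | tmul b x =>
    rw [LinearMap.rTensor_tmul, bta_tmul, bta_tmul, LinearMap.mulLeft_apply, map_mul, mul_assoc]
  | add v₁ v₂ ih₁ ih₂ => simp only [map_add, mul_add, ih₁, ih₂]

lemma gma_equivariant (hlco_coassoc : (LinearMap.lTensor H lco.toLinearMap) ∘ₗ lco.toLinearMap =
      (TensorProduct.assoc k H H A).toLinearMap ∘ₗ
        (LinearMap.rTensor A Coalgebra.comul) ∘ₗ lco.toLinearMap)
    (hlco_counit : (TensorProduct.lid k A).toLinearMap ∘ₗ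
        (LinearMap.rTensor A Coalgebra.counit) ∘ₗ lco.toLinearMap = LinearMap.id)
    (hS'l : S' ∘ₗ HopfAlgebra.antipode (R := k) = LinearMap.id)
    (hS'r : HopfAlgebra.antipode (R := k) ∘ₗ S' = LinearMap.id)
    (a : A) (t : H ⊗[k] A) :
    gma k H A lco S' (lco a * t)
      = (LinearMap.rTensor H (LinearMap.mulLeft k a)) (gma k H A lco S' t) := by
  have hbg := LinearMap.congr_fun (bta_gma_id k H A lco S' hlco_coassoc hlco_counit hS'l hS'r) t
  have hgb := LinearMap.congr_fun (gma_bta_id k H A lco S' hlco_coassoc hlco_counit hS'l hS'r)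
    ((LinearMap.rTensor H (LinearMap.mulLeft k a)) (gma k H A lco S' t))
  simp only [LinearMap.comp_apply, LinearMap.id_apply] at hbg hgb
  conv_lhs => rw [← hbg, ← bta_equivariant]
  rw [hgb]

/-- The `A`-linear extension `Hom_k(H, N) → Hom_k(H ⊗ A, N)`. -/
def extmap (φ : H →ₗ[k] N) : H ⊗[k] A →ₗ[k] N :=
  (TensorProduct.lift (csmul k A N)) ∘ₗ (LinearMap.lTensor A φ) ∘ₗ gma k H A lco S'

lemma smul_transport (a : A) (φ : H →ₗ[k] N) (v : A ⊗[k] H) :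
    (TensorProduct.lift (csmul k A N)) ((LinearMap.lTensor A φ)
        ((LinearMap.rTensor H (LinearMap.mulLeft k a)) v))
      = a • (TensorProduct.lift (csmul k A N)) ((LinearMap.lTensor A φ) v) := by
  induction v using TensorProduct.induction_on with
  | zero => simp
  | tmul b x => simp [mul_smul]
  | add v₁ v₂ ih₁ ih₂ => simp only [map_add, smul_add, ih₁, ih₂]

lemma extmap_isALin (hlco_coassoc : (LinearMap.lTensor H lco.toLinearMap) ∘ₗ lco.toLinearMap =
      (TensorProduct.assoc k H H A).toLinearMap ∘ₗ
        (LinearMap.rTensor A Coalgebra.comul) ∘ₗ lco.toLinearMap)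
    (hlco_counit : (TensorProduct.lid k A).toLinearMap ∘ₗ
        (LinearMap.rTensor A Coalgebra.counit) ∘ₗ lco.toLinearMap = LinearMap.id)
    (hS'l : S' ∘ₗ HopfAlgebra.antipode (R := k) = LinearMap.id)
    (hS'r : HopfAlgebra.antipode (R := k) ∘ₗ S' = LinearMap.id)
    (φ : H →ₗ[k] N) : IsALin k H A lco N (extmap k H A lco S' N φ) := by
  intro a t
  rw [extmap, LinearMap.comp_apply, LinearMap.comp_apply,
    gma_equivariant k H A lco S' hlco_coassoc hlco_counit hS'l hS'r, smul_transport]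
  rfl

lemma restr_extmap (hS'l : S' ∘ₗ HopfAlgebra.antipode (R := k) = LinearMap.id)
    (φ : H →ₗ[k] N) : restr k H A N (extmap k H A lco S' N φ) = φ := by
  ext x
  have hone : lco (1 : A) = (1 : H) ⊗ₜ[k] (1 : A) := by
    rw [map_one, Algebra.TensorProduct.one_def]
  simp only [restr, extmap, LinearMap.comp_apply, TensorProduct.mk_apply,
    LinearMap.flip_apply, gma_tmul, hone, cS_tmul, S'_one S' hS'l]
  simp

lemma extmap_restr (hlco_coassoc : (LinearMap.lTensor H lco.toLinearMap) ∘ₗ lco.toLinearMap =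
      (TensorProduct.assoc k H H A).toLinearMap ∘ₗ
        (LinearMap.rTensor A Coalgebra.comul) ∘ₗ lco.toLinearMap)
    (hlco_counit : (TensorProduct.lid k A).toLinearMap ∘ₗ
        (LinearMap.rTensor A Coalgebra.counit) ∘ₗ lco.toLinearMap = LinearMap.id)
    (hS'l : S' ∘ₗ HopfAlgebra.antipode (R := k) = LinearMap.id)
    (hS'r : HopfAlgebra.antipode (R := k) ∘ₗ S' = LinearMap.id)
    (ψ : H ⊗[k] A →ₗ[k] N) (hψ : IsALin k H A lco N ψ) :
    extmap k H A lco S' N (restr k H A N ψ) = ψ := by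
  have h1 : extmap k H A lco S' N (restr k H A N ψ) ∘ₗ bta k H A lco = ψ ∘ₗ bta k H A lco := by
    apply TensorProduct.ext'
    intro a x
    have hAL := extmap_isALin k H A lco S' N hlco_coassoc hlco_counit hS'l hS'r
      (restr k H A N ψ) a (x ⊗ₜ 1)
    have hre := LinearMap.congr_fun
      (restr_extmap k H A lco S' N hS'l (restr k H A N ψ)) x
    simp only [LinearMap.comp_apply, bta_tmul]
    have hx : extmap k H A lco S' N (restr k H A N ψ) (x ⊗ₜ 1) = ψ (x ⊗ₜ 1) := by
      simpa [restr] using hre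
    rw [hAL, hψ a (x ⊗ₜ 1), hx]
  have h2 := bta_gma_id k H A lco S' hlco_coassoc hlco_counit hS'l hS'r
  calc extmap k H A lco S' N (restr k H A N ψ)
      = extmap k H A lco S' N (restr k H A N ψ) ∘ₗ (bta k H A lco ∘ₗ gma k H A lco S') := by
        rw [h2, LinearMap.comp_id]
    _ = (extmap k H A lco S' N (restr k H A N ψ) ∘ₗ bta k H A lco) ∘ₗ gma k H A lco S' := by
        rw [LinearMap.comp_assoc]
    _ = (ψ ∘ₗ bta k H A lco) ∘ₗ gma k H A lco S' := by rw [h1]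
    _ = ψ ∘ₗ (bta k H A lco ∘ₗ gma k H A lco S') := by rw [LinearMap.comp_assoc]
    _ = ψ := by rw [h2, LinearMap.comp_id]

lemma Theta_tmul (h : H) (a : A) (φ : H →ₗ[k] N) (x : H) :
    Theta k H A lco S' N (h ⊗ₜ a) φ x = extmap k H A lco S' N φ ((x * h) ⊗ₜ a) := by
  have hT : Theta k H A lco S' N (h ⊗ₜ a) φ =
      TensorProduct.lift (csmul k A (H →ₗ[k] N))
        ((LinearMap.lTensor A (TensorProduct.lift (sandwichHom k H N)))
          ((TensorProduct.assoc k A (H ⊗[k] H) (H →ₗ[k] N)).toLinearMap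
            ((coactS' k H A lco S' (h ⊗ₜ a)) ⊗ₜ[k] φ))) := by
    rw [Theta, TensorProduct.curry_apply]
    rfl
  rw [hT, coactS'_tmul, extmap, LinearMap.comp_apply, LinearMap.comp_apply, gma_tmul]
  generalize lco a = u
  induction u using TensorProduct.induction_on with
  | zero => simp only [tmul_zero, map_zero, TensorProduct.zero_tmul, LinearMap.zero_apply]
  | tmul y c =>
    rw [cS_tmul, cS_tmul]
    simp [sandwichHom, sandwich, LinearMap.mulRight_apply]
  | add u₁ u₂ ih₁ ih₂ =>
    simp only [tmul_add, map_add, TensorProduct.add_tmul, LinearMap.add_apply, ih₁, ih₂]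

lemma homAct_zero (ψ : H ⊗[k] A →ₗ[k] N) : homAct k H A N 0 ψ = 0 := by
  apply LinearMap.ext; intro t
  simp [homAct]

lemma homAct_add (w w' : H ⊗[k] A) (ψ : H ⊗[k] A →ₗ[k] N) :
    homAct k H A N (w + w') ψ = homAct k H A N w ψ + homAct k H A N w' ψ := by
  apply LinearMap.ext; intro t
  simp [homAct, mul_add]

lemma homAct_mul (w w' : H ⊗[k] A) (ψ : H ⊗[k] A →ₗ[k] N) :
    homAct k H A N (w * w') ψ = homAct k H A N w (homAct k H A N w' ψ) := by
  apply LinearMap.ext; intro t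
  simp [homAct, mul_assoc]

lemma homAct_one (ψ : H ⊗[k] A →ₗ[k] N) : homAct k H A N 1 ψ = ψ := by
  apply LinearMap.ext; intro t
  simp [homAct]

lemma restr_add (ψ ψ' : H ⊗[k] A →ₗ[k] N) :
    restr k H A N (ψ + ψ') = restr k H A N ψ + restr k H A N ψ' := by
  apply LinearMap.ext; intro x
  simp [restr]

lemma restr_homAct_extmap (w : H ⊗[k] A) (φ : H →ₗ[k] N) :
    restr k H A N (homAct k H A N w (extmap k H A lco S' N φ)) = Theta k H A lco S' N w φ := by
  induction w using TensorProduct.induction_on with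
  | zero =>
    rw [homAct_zero, map_zero, LinearMap.zero_apply]
    apply LinearMap.ext; intro x
    simp [restr]
  | tmul h a =>
    apply LinearMap.ext; intro x
    rw [Theta_tmul]
    simp only [restr, homAct, LinearMap.comp_apply, TensorProduct.mk_apply,
      LinearMap.flip_apply, LinearMap.mulRight_apply,
      Algebra.TensorProduct.tmul_mul_tmul, one_mul]
  | add w₁ w₂ ih₁ ih₂ =>
    rw [homAct_add, restr_add, ih₁, ih₂, map_add, LinearMap.add_apply]

lemma restr_homAct (hlco_coassoc : (LinearMap.lTensor H lco.toLinearMap) ∘ₗ lco.toLinearMap =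
      (TensorProduct.assoc k H H A).toLinearMap ∘ₗ
        (LinearMap.rTensor A Coalgebra.comul) ∘ₗ lco.toLinearMap)
    (hlco_counit : (TensorProduct.lid k A).toLinearMap ∘ₗ
        (LinearMap.rTensor A Coalgebra.counit) ∘ₗ lco.toLinearMap = LinearMap.id)
    (hS'l : S' ∘ₗ HopfAlgebra.antipode (R := k) = LinearMap.id)
    (hS'r : HopfAlgebra.antipode (R := k) ∘ₗ S' = LinearMap.id)
    (w : H ⊗[k] A) (ψ : H ⊗[k] A →ₗ[k] N) (hψ : IsALin k H A lco N ψ) :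
    restr k H A N (homAct k H A N w ψ) = Theta k H A lco S' N w (restr k H A N ψ) := by
  calc restr k H A N (homAct k H A N w ψ)
      = restr k H A N (homAct k H A N w
          (extmap k H A lco S' N (restr k H A N ψ))) := by
        rw [extmap_restr k H A lco S' N hlco_coassoc hlco_counit hS'l hS'r ψ hψ]
    _ = Theta k H A lco S' N w (restr k H A N ψ) :=
        restr_homAct_extmap k H A lco S' N w (restr k H A N ψ)

end Stmt4Aux


open Stmt4Aux in
theorem stmt4
    (hlco_coassoc : (LinearMap.lTensor H lco.toLinearMap) ∘ₗ lco.toLinearMap =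
      (TensorProduct.assoc k H H A).toLinearMap ∘ₗ
        (LinearMap.rTensor A Coalgebra.comul) ∘ₗ lco.toLinearMap)
    (hlco_counit : (TensorProduct.lid k A).toLinearMap ∘ₗ
        (LinearMap.rTensor A Coalgebra.counit) ∘ₗ lco.toLinearMap = LinearMap.id)
    (hS'l : S' ∘ₗ HopfAlgebra.antipode (R := k) = LinearMap.id)
    (hS'r : HopfAlgebra.antipode (R := k) ∘ₗ S' = LinearMap.id) :
    -- (i) the formula defines a left `H ⊗ A`-module structure on `Hom_k(H, N)`
    ((∀ w w' : H ⊗[k] A, Theta k H A lco S' N (w * w') =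
        Theta k H A lco S' N w ∘ₗ Theta k H A lco S' N w')
      ∧ Theta k H A lco S' N 1 = LinearMap.id)
    -- the right-multiplication action preserves `Hom_A(H ⊗ A, N)`
    ∧ (∀ (w : H ⊗[k] A) (ψ : H ⊗[k] A →ₗ[k] N), IsALin k H A lco N ψ →
        IsALin k H A lco N (homAct k H A N w ψ))
    -- (ii) `ψ ↦ (x ↦ ψ (x ⊗ 1))` intertwines the two `H ⊗ A`-module structures …
    ∧ (∀ (w : H ⊗[k] A) (ψ : H ⊗[k] A →ₗ[k] N), IsALin k H A lco N ψ →
        restr k H A N (homAct k H A N w ψ) = Theta k H A lco S' N w (restr k H A N ψ))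
    -- … and is a bijection from `Hom_A(H ⊗ A, N)` onto `Hom_k(H, N)`
    ∧ Set.BijOn (restr k H A N) {ψ | IsALin k H A lco N ψ} Set.univ := by
  have hAL := extmap_isALin k H A lco S' N hlco_coassoc hlco_counit hS'l hS'r
  have hER := extmap_restr k H A lco S' N hlco_coassoc hlco_counit hS'l hS'r
  have hRE := restr_extmap k H A lco S' N hS'l
  have hRH := restr_homAct k H A lco S' N hlco_coassoc hlco_counit hS'l hS'r
  refine ⟨⟨?_, ?_⟩, ?_, ?_, ?_⟩
  · -- multiplicativity of Theta
    intro w w'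
    apply LinearMap.ext; intro φ
    rw [LinearMap.comp_apply]
    calc Theta k H A lco S' N (w * w') φ
        = restr k H A N (homAct k H A N (w * w') (extmap k H A lco S' N φ)) :=
          (restr_homAct_extmap k H A lco S' N (w * w') φ).symm
      _ = restr k H A N (homAct k H A N w
            (homAct k H A N w' (extmap k H A lco S' N φ))) := by
          rw [homAct_mul]
      _ = Theta k H A lco S' N w
            (restr k H A N (homAct k H A N w' (extmap k H A lco S' N φ))) := by
          refine hRH w _ ?_
          intro a t
          simp only [homAct, LinearMap.comp_apply, LinearMap.mulRight_apply, mul_assoc]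
          exact hAL φ a _
      _ = Theta k H A lco S' N w (Theta k H A lco S' N w' φ) := by
          rw [restr_homAct_extmap]
  · -- unit acts as identity
    apply LinearMap.ext; intro φ
    calc Theta k H A lco S' N 1 φ
        = restr k H A N (homAct k H A N 1 (extmap k H A lco S' N φ)) :=
          (restr_homAct_extmap k H A lco S' N 1 φ).symm
      _ = restr k H A N (extmap k H A lco S' N φ) := by rw [homAct_one]
      _ = φ := hRE φ
  · -- homAct preserves A-linearity
    intro w ψ hψ a t
    simp only [homAct, LinearMap.comp_apply, LinearMap.mulRight_apply, mul_assoc]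
    exact hψ a _
  · -- restr intertwines the two actions
    intro w ψ hψ
    exact hRH w ψ hψ
  · -- bijectivity
    refine ⟨fun ψ _ => trivial, ?_, ?_⟩
    · intro ψ₁ h₁ ψ₂ h₂ hr
      calc ψ₁ = extmap k H A lco S' N (restr k H A N ψ₁) := (hER ψ₁ h₁).symm
        _ = extmap k H A lco S' N (restr k H A N ψ₂) := by rw [hr]
        _ = ψ₂ := hER ψ₂ h₂
    · intro φ _
      exact ⟨extmap k H A lco S' N φ, hAL φ, hRE φ⟩


end
end

section
/- Let (M•, d, h) be an S¹-object over (R, σ), and let M•[ε] be the graded R-module with degree-i component Mⁱ ⊕ Mⁱ⁺¹, elements written m₁ + εm₂ (so ε has degree −1). Define D₁(m₁+εm₂) = dm₁ + (1−σ)m₂ − εdm₂, H₁(m₁+εm₂) = εm₁, and D₂(m₁+εm₂) = dm₁ − εdm₂, H₂(m₁+εm₂) = hm₁ + ε(m₁ − hm₂). Then both (M•[ε], D₁, H₁) and (M•[ε], D₂, H₂) are S¹-objects over (R, σ), and the degree-0 R-linear map Φ(m₁+εm₂) = (m₁ + hm₂) + εm₂ is an isomorphism satisfying Φ ∘ D₁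 = D₂ ∘ Φ and Φ ∘ H₁ = H₂ ∘ Φ, with inverse m₁+εm₂ ↦ (m₁ − hm₂) + εm₂. -/
/-!
# Statement 14

`k` a field, `R` a `k`-algebra, `σ ∈ R` central.  Given an S¹-object `(M, d, h)` over `(R, σ)`,
let `M[ε]` have degree-`i` component `Mⁱ ⊕ Mⁱ⁺¹` (elements `m₁ + ε m₂`, `deg ε = −1`).  With
`D₁(m₁+εm₂) = d m₁ + (1−σ) m₂ − ε d m₂`, `H₁(m₁+εm₂) = ε m₁`,
`D₂(m₁+εm₂) = d m₁ − ε d m₂`, `H₂(m₁+εm₂) = h m₁ + ε (m₁ − h m₂)`,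
both `(M[ε], D₁, H₁)` and `(M[ε], D₂, H₂)` are S¹-objects over `(R, σ)`, and
`Φ(m₁+εm₂) = (m₁ + h m₂) + ε m₂` is an isomorphism with `Φ ∘ D₁ = D₂ ∘ Φ`,
`Φ ∘ H₁ = H₂ ∘ Φ`, and inverse `m₁+εm₂ ↦ (m₁ − h m₂) + ε m₂`.
-/

noncomputable section

variable {R : Type} [Ring R]
variable {M : ℤ → Type} [∀ i, AddCommGroup (M i)] [∀ i, Module R (M i)]

/-- Multiplication by a central element `σ`, as an `R`-linear map. -/
def cSmul (σ : R) (hσ : ∀ r : R, σ * r = r * σ) (W : Type) [AddCommGroup W] [Module R W] :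
    W →ₗ[R] W where
  toFun w := σ • w
  map_add' := smul_add σ
  map_smul' r w := by
    simp only [RingHom.id_apply]
    rw [smul_smul, hσ, ← smul_smul]

/-- `D₁(m₁ + ε m₂) = d m₁ + (1 − σ) m₂ − ε d m₂`. -/
def D1 (σ : R) (hσ : ∀ r : R, σ * r = r * σ) (d : ∀ i, M i →ₗ[R] M (i + 1)) (i : ℤ) :
    (M i × M (i + 1)) →ₗ[R] (M (i + 1) × M (i + 1 + 1)) :=
  LinearMap.prod
    (d i ∘ₗ LinearMap.fst R (M i) (M (i + 1)) +
      (LinearMap.id - cSmul σ hσ (M (i + 1))) ∘ₗ LinearMap.snd R (M i) (M (i + 1)))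
    (-(d (i + 1) ∘ₗ LinearMap.snd R (M i) (M (i + 1))))

/-- `H₁(m₁ + ε m₂) = ε m₁`. -/
def H1 (i : ℤ) : (M (i + 1) × M (i + 1 + 1)) →ₗ[R] (M i × M (i + 1)) :=
  LinearMap.prod 0 (LinearMap.fst R (M (i + 1)) (M (i + 1 + 1)))

/-- `D₂(m₁ + ε m₂) = d m₁ − ε d m₂`. -/
def D2 (d : ∀ i, M i →ₗ[R] M (i + 1)) (i : ℤ) :
    (M i × M (i + 1)) →ₗ[R] (M (i + 1) × M (i + 1 + 1)) :=
  LinearMap.prod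
    (d i ∘ₗ LinearMap.fst R (M i) (M (i + 1)))
    (-(d (i + 1) ∘ₗ LinearMap.snd R (M i) (M (i + 1))))

/-- `H₂(m₁ + ε m₂) = h m₁ + ε (m₁ − h m₂)`. -/
def H2 (h : ∀ i, M (i + 1) →ₗ[R] M i) (i : ℤ) :
    (M (i + 1) × M (i + 1 + 1)) →ₗ[R] (M i × M (i + 1)) :=
  LinearMap.prod
    (h i ∘ₗ LinearMap.fst R (M (i + 1)) (M (i + 1 + 1)))
    (LinearMap.fst R (M (i + 1)) (M (i + 1 + 1)) -
      h (i + 1) ∘ₗ LinearMap.snd R (M (i + 1)) (M (i + 1 + 1)))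

/-- `Φ(m₁ + ε m₂) = (m₁ + h m₂) + ε m₂`. -/
def Phi (h : ∀ i, M (i + 1) →ₗ[R] M i) (i : ℤ) :
    (M i × M (i + 1)) →ₗ[R] (M i × M (i + 1)) :=
  LinearMap.prod
    (LinearMap.fst R (M i) (M (i + 1)) + h i ∘ₗ LinearMap.snd R (M i) (M (i + 1)))
    (LinearMap.snd R (M i) (M (i + 1)))

/-- `Ψ(m₁ + ε m₂) = (m₁ − h m₂) + ε m₂` (the claimed inverse of `Φ`). -/
def Psi (h : ∀ i, M (i + 1) →ₗ[R] M i) (i : ℤ) :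
    (M i × M (i + 1)) →ₗ[R] (M i × M (i + 1)) :=
  LinearMap.prod
    (LinearMap.fst R (M i) (M (i + 1)) - h i ∘ₗ LinearMap.snd R (M i) (M (i + 1)))
    (LinearMap.snd R (M i) (M (i + 1)))

/-- The action of `σ` on the degree-`i` component of `M[ε]`. -/
def sigmaE (σ : R) (hσ : ∀ r : R, σ * r = r * σ) (i : ℤ) :
    (M i × M (i + 1)) →ₗ[R] (M i × M (i + 1)) :=
  LinearMap.prodMap (cSmul σ hσ (M i)) (cSmul σ hσ (M (i + 1)))

theorem stmt14 (σ : R) (hσ : ∀ r : R, σ * r = r * σ)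
    (d : ∀ i, M i →ₗ[R] M (i + 1)) (h : ∀ i, M (i + 1) →ₗ[R] M i)
    (hd2 : ∀ i, d (i + 1) ∘ₗ d i = 0) (hh2 : ∀ i, h i ∘ₗ h (i + 1) = 0)
    (hdh : ∀ i (x : M (i + 1)), d i (h i x) + h (i + 1) (d (i + 1) x) = x - σ • x) :
    -- `(M[ε], D₁, H₁)` is an S¹-object over `(R, σ)`
    ((∀ i, D1 σ hσ d (i + 1) ∘ₗ D1 σ hσ d i = 0)
      ∧ (∀ i : ℤ, (H1 i : (M (i+1) × M (i+1+1)) →ₗ[R] _) ∘ₗ H1 (i + 1) = 0)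
      ∧ (∀ i, D1 σ hσ d i ∘ₗ H1 i + H1 (i + 1) ∘ₗ D1 σ hσ d (i + 1) =
          LinearMap.id - sigmaE σ hσ (i + 1)))
    -- `(M[ε], D₂, H₂)` is an S¹-object over `(R, σ)`
    ∧ ((∀ i, D2 d (i + 1) ∘ₗ D2 d i = 0)
      ∧ (∀ i, H2 h i ∘ₗ H2 h (i + 1) = 0)
      ∧ (∀ i, D2 d i ∘ₗ H2 h i + H2 h (i + 1) ∘ₗ D2 d (i + 1) =
          LinearMap.id - sigmaE σ hσ (i + 1)))
    -- `Φ` intertwines the two structures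
    ∧ (∀ i, Phi h (i + 1) ∘ₗ D1 σ hσ d i = D2 d i ∘ₗ Phi h i)
    ∧ (∀ i, Phi h i ∘ₗ H1 i = H2 h i ∘ₗ Phi h (i + 1))
    -- and `Φ` is an isomorphism with the stated inverse
    ∧ (∀ i, Phi h i ∘ₗ Psi h i = LinearMap.id)
    ∧ (∀ i, Psi h i ∘ₗ Phi h i = LinearMap.id) := by
  have hd2' : ∀ i (x : M i), d (i+1) (d i x) = 0 := fun i x => by
    simpa using LinearMap.ext_iff.mp (hd2 i) x
  have hh2' : ∀ i (x : M (i+1+1)), h i (h (i+1) x) = 0 := fun i x => by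
    simpa using LinearMap.ext_iff.mp (hh2 i) x
  refine ⟨⟨fun i => ?_, fun i => ?_, fun i => ?_⟩, ⟨fun i => ?_, fun i => ?_, fun i => ?_⟩,
    fun i => ?_, fun i => ?_, fun i => ?_, fun i => ?_⟩
  all_goals refine LinearMap.ext fun ⟨a, b⟩ => ?_
  all_goals simp [D1, D2, H1, H2, Phi, Psi, sigmaE, cSmul, hd2', hh2', Prod.ext_iff]
  · exact ⟨hdh i a, by rw [← hdh]; abel⟩
  · rw [← hdh i b]; abel
end
end
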